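/- arXiv:2205.01955 — 5 statements merged into one kernel-verified Lean document; each statement's English description precedes it below -/
import Mathlib

section
/- If φ is a fuzzy simulation between fuzzy automata A and A', and ψ is a fuzzy simulation between A' and A'', then the composition φ ∘ ψ is a fuzzy simulation between A and A''. -/
/-- A complete residuated lattice: a complete lattice with a commutative monoid
structure whose unit is the top element, together with a residuum `himp`
satisfying the adjointness property. -/
class CompleteResiduatedLattice (L : Type*) extends CompleteLattice L, CommMonoid L where
  himp : L → L → L
  adjoint : ∀ a b c : L, a * b ≤ c ↔ a ≤ himp b c
  one_eq_top : (1 : L) = ⊤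

open CompleteResiduatedLattice

variable {L : Type*} [CompleteResiduatedLattice L]

/-- Sup-⊗ composition of fuzzy relations. -/
def relComp {X Y Z : Type*} (φ : X → Y → L) (ψ : Y → Z → L) : X → Z → L :=
  fun x z => ⨆ y, φ x y * ψ y z

/-- Composition of a fuzzy relation with a fuzzy set. -/
def relSet {X Y : Type*} (φ : X → Y → L) (g : Y → L) : X → L :=
  fun x => ⨆ y, φ x y * g y

/-- Composition of a fuzzy set with a fuzzy relation. -/
def setRel {X Y : Type*} (f : X → L) (φ : X → Y → L) : Y → L :=
  fun y => ⨆ x, f x * φ x y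

/-- The converse of a fuzzy relation. -/
def conv {X Y : Type*} (φ : X → Y → L) : Y → X → L := fun y x => φ x y

/-- The fuzzy degree of inclusion of fuzzy sets. -/
def fuzS {X : Type*} (f g : X → L) : L := ⨅ x, himp (f x) (g x)

/-- The fuzzy degree of equality of fuzzy sets. -/
def fuzE {X : Type*} (f g : X → L) : L := ⨅ x, himp (f x) (g x) ⊓ himp (g x) (f x)

/-- A fuzzy automaton over the alphabet `Sig` with state set `A`. -/
structure FuzzyAutomaton (L : Type*) (Sig : Type*) (A : Type*) where
  δ : A → Sig → A → L
  σ : A → L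
  τ : A → L

variable {Sig : Type*}

/-- A fuzzy simulation between two fuzzy automata. -/
def IsFuzzySimulation {A A' : Type*} (M : FuzzyAutomaton L Sig A)
    (M' : FuzzyAutomaton L Sig A') (φ : A → A' → L) : Prop :=
  (∀ s, relComp (conv φ) (fun x y => M.δ x s y) ≤
        relComp (fun x' y' => M'.δ x' s y') (conv φ)) ∧
  relSet (conv φ) M.τ ≤ M'.τ

/-- The norm of a fuzzy simulation: `S(σ^A, σ^{A'} ∘ φ⁻¹)`. -/
def simNorm {A A' : Type*} (M : FuzzyAutomaton L Sig A)
    (M' : FuzzyAutomaton L Sig A') (φ : A → A' → L) : L :=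
  fuzS M.σ (setRel M'.σ (conv φ))

/-- A fuzzy bisimulation between two fuzzy automata. -/
def IsFuzzyBisimulation {A A' : Type*} (M : FuzzyAutomaton L Sig A)
    (M' : FuzzyAutomaton L Sig A') (φ : A → A' → L) : Prop :=
  IsFuzzySimulation M M' φ ∧ IsFuzzySimulation M' M (conv φ)

/-- The norm of a fuzzy bisimulation. -/
def bisimNorm {A A' : Type*} (M : FuzzyAutomaton L Sig A)
    (M' : FuzzyAutomaton L Sig A') (φ : A → A' → L) : L :=
  simNorm M M' φ ⊓ simNorm M' M (conv φ)

/-- The fuzzy language recognized from a given state: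
`L(A,x)(s₁…sₙ) = (δ_{s₁} ∘ … ∘ δ_{sₙ} ∘ τ)(x)`. -/
def langFrom {A : Type*} (M : FuzzyAutomaton L Sig A) : A → List Sig → L
  | x, [] => M.τ x
  | x, s :: w => ⨆ y, M.δ x s y * langFrom M y w

/-- The fuzzy language recognized by a fuzzy automaton. -/
def lang {A : Type*} (M : FuzzyAutomaton L Sig A) (w : List Sig) : L :=
  ⨆ x, M.σ x * langFrom M x w

lemma crl_mul_le_mul_left {a b c : L} (h : a ≤ b) : c * a ≤ c * b := by
  rw [mul_comm c a, mul_comm c b]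
  exact (adjoint a c (b * c)).2 (le_trans h ((adjoint b c (b * c)).1 le_rfl))

lemma crl_mul_iSup {ι : Sort*} (c : L) (f : ι → L) :
    c * (⨆ i, f i) = ⨆ i, c * f i := by
  apply le_antisymm
  · rw [mul_comm]
    rw [adjoint]
    apply iSup_le
    intro i
    rw [← adjoint, mul_comm]
    exact le_iSup (fun i => c * f i) i
  · exact iSup_le fun i => crl_mul_le_mul_left (le_iSup f i)

lemma crl_iSup_mul {ι : Sort*} (c : L) (f : ι → L) :
    (⨆ i, f i) * c = ⨆ i, f i * c := by
  rw [mul_comm, crl_mul_iSup]; simp [mul_comm]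

lemma relComp_assoc {X Y Z W : Type*} (φ : X → Y → L) (ψ : Y → Z → L) (χ : Z → W → L) :
    relComp (relComp φ ψ) χ = relComp φ (relComp ψ χ) := by
  funext x w
  simp only [relComp, crl_iSup_mul, crl_mul_iSup]
  rw [iSup_comm]
  congr 1; funext y; congr 1; funext z; rw [mul_assoc]

lemma conv_relComp {X Y Z : Type*} (φ : X → Y → L) (ψ : Y → Z → L) :
    conv (relComp φ ψ) = relComp (conv ψ) (conv φ) := by
  funext z x
  simp only [conv, relComp, mul_comm]

lemma relComp_mono_left {X Y Z : Type*} {φ φ' : X → Y → L} (ψ : Y → Z → L)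
    (h : φ ≤ φ') : relComp φ ψ ≤ relComp φ' ψ := by
  intro x z
  exact iSup_mono fun y => by
    rw [mul_comm _ (ψ y z), mul_comm _ (ψ y z)]
    exact crl_mul_le_mul_left (h x y)

lemma relComp_mono_right {X Y Z : Type*} (φ : X → Y → L) {ψ ψ' : Y → Z → L}
    (h : ψ ≤ ψ') : relComp φ ψ ≤ relComp φ ψ' := by
  intro x z
  exact iSup_mono fun y => crl_mul_le_mul_left (h y z)

lemma relSet_eq_relComp {X Y : Type*} (φ : X → Y → L) (g : Y → L) :
    relSet φ g = fun x => relComp φ (fun y (_ : Unit) => g y) x () := by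
  funext x; rfl

lemma relSet_mono_right {X Y : Type*} (φ : X → Y → L) {g g' : Y → L}
    (h : g ≤ g') : relSet φ g ≤ relSet φ g' :=
  fun x => iSup_mono fun y => crl_mul_le_mul_left (h y)

lemma relComp_relSet {X Y Z : Type*} (φ : X → Y → L) (ψ : Y → Z → L) (g : Z → L) :
    relSet (relComp φ ψ) g = relSet φ (relSet ψ g) := by
  funext x
  simp only [relSet, relComp, crl_iSup_mul, crl_mul_iSup]
  rw [iSup_comm]
  congr 1; funext y; congr 1; funext z; rw [mul_assoc]

theorem stmt7 {A A' A'' : Type*} [Nonempty A] [Nonempty A'] [Nonempty A'']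
    (M : FuzzyAutomaton L Sig A) (M' : FuzzyAutomaton L Sig A') (M'' : FuzzyAutomaton L Sig A'')
    (φ : A → A' → L) (ψ : A' → A'' → L)
    (hφ : IsFuzzySimulation M M' φ) (hψ : IsFuzzySimulation M' M'' ψ) :
    IsFuzzySimulation M M'' (relComp φ ψ) := by
  obtain ⟨hφδ, hφτ⟩ := hφ
  obtain ⟨hψδ, hψτ⟩ := hψ
  constructor
  · intro s
    rw [conv_relComp, relComp_assoc]
    calc relComp (conv ψ) (relComp (conv φ) fun x y => M.δ x s y)
        ≤ relComp (conv ψ) (relComp (fun x' y' => M'.δ x' s y') (conv φ)) :=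
          relComp_mono_right _ (hφδ s)
      _ = relComp (relComp (conv ψ) fun x' y' => M'.δ x' s y') (conv φ) :=
          (relComp_assoc _ _ _).symm
      _ ≤ relComp (relComp (fun x'' y'' => M''.δ x'' s y'') (conv ψ)) (conv φ) :=
          relComp_mono_left _ (hψδ s)
      _ = relComp (fun x'' y'' => M''.δ x'' s y'') (relComp (conv ψ) (conv φ)) :=
          relComp_assoc _ _ _
  · rw [conv_relComp, relComp_relSet]
    calc relSet (conv ψ) (relSet (conv φ) M.τ)
        ≤ relSet (conv ψ) M'.τ := relSet_mono_right _ hφτ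
      _ ≤ M''.τ := hψτ
end

section
/- If Φ is a set of fuzzy simulations between fuzzy automata A and A', then the pointwise supremum ⋃Φ, defined by (⋃Φ)(x,x') = ⋁_{φ∈Φ} φ(x,x'), is also a fuzzy simulation between A and A'. Consequently, the greatest fuzzy simulation between A and A' exists. -/
open CompleteResiduatedLattice

variable {L : Type*} [CompleteResiduatedLattice L]

variable {Sig : Type*}

lemma crl_mul_mono_left {a b : L} (c : L) (h : a ≤ b) : a * c ≤ b * c :=
  (adjoint a c (b * c)).mpr (h.trans ((adjoint b c (b * c)).mp le_rfl))

lemma crl_mul_mono_right {a b : L} (c : L) (h : a ≤ b) : c * a ≤ c * b := by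
  rw [mul_comm c a, mul_comm c b]; exact crl_mul_mono_left c h

lemma crl_iSup_mul_le {ι : Sort*} {f : ι → L} {c d : L}
    (h : ∀ i, f i * c ≤ d) : (⨆ i, f i) * c ≤ d :=
  (adjoint _ c d).mpr (iSup_le fun i => (adjoint (f i) c d).mp (h i))

theorem simSup {A A' : Type*} (M : FuzzyAutomaton L Sig A) (M' : FuzzyAutomaton L Sig A')
    (Φ : Set (A → A' → L)) (hΦ : ∀ φ ∈ Φ, IsFuzzySimulation M M' φ) :
    IsFuzzySimulation M M' (fun x x' => ⨆ φ ∈ Φ, φ x x') := by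
  constructor
  · intro s x' z
    refine iSup_le fun y => ?_
    refine crl_iSup_mul_le fun φ => crl_iSup_mul_le fun hφ => ?_
    have h1 : φ y x' * M.δ y s z ≤ relComp (fun a b => M'.δ a s b) (conv φ) x' z :=
      le_trans (le_iSup (fun y => conv φ x' y * M.δ y s z) y) ((hΦ φ hφ).1 s x' z)
    refine h1.trans (iSup_mono fun y' => crl_mul_mono_right _ ?_)
    exact le_iSup₂_of_le φ hφ le_rfl
  · intro x'
    refine iSup_le fun y => ?_
    refine crl_iSup_mul_le fun φ => crl_iSup_mul_le fun hφ => ?_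
    exact le_trans (le_iSup (fun y => conv φ x' y * M.τ y) y) ((hΦ φ hφ).2 x')

theorem stmt8 {A A' : Type*} [Nonempty A] [Nonempty A']
    (M : FuzzyAutomaton L Sig A) (M' : FuzzyAutomaton L Sig A')
    (Φ : Set (A → A' → L)) (hΦ : ∀ φ ∈ Φ, IsFuzzySimulation M M' φ) :
    IsFuzzySimulation M M' (fun x x' => ⨆ φ ∈ Φ, φ x x') ∧
    ∃ ζ : A → A' → L, IsFuzzySimulation M M' ζ ∧
      ∀ ψ : A → A' → L, IsFuzzySimulation M M' ψ → ψ ≤ ζ := by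
  refine ⟨simSup M M' Φ hΦ, fun x x' => ⨆ φ ∈ {φ | IsFuzzySimulation M M' φ}, φ x x',
    simSup M M' _ (fun φ hφ => hφ), fun ψ hψ x x' => le_iSup₂_of_le ψ hψ le_rfl⟩
end

section
/- If φ is a fuzzy simulation between fuzzy automata A and A', then for every x ∈ A and x' ∈ A': φ(x,x') ≤ S(L(A,x), L(A',x')), i.e., the degree φ(x,x') is at most the degree to which the fuzzy language recognized from state x in A is included in the fuzzy language recognized from state x' in A'. -/
open CompleteResiduatedLattice

variable {L : Type*} [CompleteResiduatedLattice L]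

variable {Sig : Type*}

private lemma mul_mono_left' {a b c : L} (h : a ≤ b) : a * c ≤ b * c := by
  rw [adjoint]
  exact h.trans ((adjoint b c (b * c)).mp le_rfl)

private lemma iSup_mul_le_iff {ι : Sort*} {f : ι → L} {c d : L} :
    (⨆ i, f i) * c ≤ d ↔ ∀ i, f i * c ≤ d := by
  rw [adjoint, iSup_le_iff]
  exact forall_congr' fun i => (adjoint (f i) c d).symm

private lemma key {A A' : Type*} (M : FuzzyAutomaton L Sig A)
    (M' : FuzzyAutomaton L Sig A') (φ : A → A' → L)
    (hφ : IsFuzzySimulation M M' φ) (w : List Sig) :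
    ∀ x x', φ x x' * langFrom M x w ≤ langFrom M' x' w := by
  induction w with
  | nil =>
    intro x x'
    exact le_trans (le_iSup (fun y => φ y x' * M.τ y) x) (hφ.2 x')
  | cons s w ih =>
    intro x x'
    show φ x x' * (⨆ y, M.δ x s y * langFrom M y w) ≤ langFrom M' x' (s :: w)
    rw [mul_comm, iSup_mul_le_iff]
    intro y
    calc M.δ x s y * langFrom M y w * φ x x'
        = φ x x' * M.δ x s y * langFrom M y w := by rw [mul_comm, ← mul_assoc]
      _ ≤ (⨆ y', M'.δ x' s y' * φ y y') * langFrom M y w := by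
          apply mul_mono_left'
          exact le_trans (le_iSup (fun z => φ z x' * M.δ z s y) x) (hφ.1 s x' y)
      _ ≤ langFrom M' x' (s :: w) := by
          rw [iSup_mul_le_iff]
          intro y'
          calc M'.δ x' s y' * φ y y' * langFrom M y w
              = φ y y' * langFrom M y w * M'.δ x' s y' := by rw [mul_assoc, mul_comm]
            _ ≤ langFrom M' y' w * M'.δ x' s y' := mul_mono_left' (ih y y')
            _ = M'.δ x' s y' * langFrom M' y' w := mul_comm _ _
            _ ≤ ⨆ z, M'.δ x' s z * langFrom M' z w :=
                le_iSup (fun z => M'.δ x' s z * langFrom M' z w) y'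

theorem stmt13 {A A' : Type*} [Nonempty A] [Nonempty A']
    (M : FuzzyAutomaton L Sig A) (M' : FuzzyAutomaton L Sig A')
    (φ : A → A' → L) (hφ : IsFuzzySimulation M M' φ) (x : A) (x' : A') :
    φ x x' ≤ fuzS (langFrom M x) (langFrom M' x') := by
  refine le_iInf fun w => ?_
  rw [← adjoint]
  exact key M M' φ hφ w x x'
end

section
/- If φ is a fuzzy simulation between fuzzy automata A and A', then for every formula w in the simulation logic F_s: φ⁻¹ ∘ w^A ≤ w^{A'} (pointwise). In particular φ(x,x') ≤ ⋀_{w∈F_s}(w^A(x) → w^{A'}(x')). -/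
open CompleteResiduatedLattice

variable {L : Type*} [CompleteResiduatedLattice L]

variable {Sig : Type*}

/-- The set `F_s` of formulas of the simulation logic. -/
inductive SimForm (L : Type*) (Sig : Type*) where
  | tau : SimForm L Sig
  | act : Sig → SimForm L Sig → SimForm L Sig
  | imp : L → SimForm L Sig → SimForm L Sig
  | and : SimForm L Sig → SimForm L Sig → SimForm L Sig

/-- Semantics of formulas of `F_s` in a fuzzy automaton. -/
def SimForm.eval {A : Type*} (M : FuzzyAutomaton L Sig A) : SimForm L Sig → A → L
  | .tau, x => M.τ x
  | .act s w, x => ⨆ y, M.δ x s y * SimForm.eval M w y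
  | .imp a w, x => himp a (SimForm.eval M w x)
  | .and w₁ w₂, x => SimForm.eval M w₁ x ⊓ SimForm.eval M w₂ x

lemma crl_mul_le_mul {a b c d : L} (h1 : a ≤ b) (h2 : c ≤ d) : a * c ≤ b * d := by
  have hbc : a * c ≤ b * c :=
    (adjoint a c (b * c)).mpr (h1.trans ((adjoint b c (b * c)).mp le_rfl))
  have hcd : b * c ≤ b * d := by
    rw [mul_comm b c, mul_comm b d]
    exact (adjoint c b (d * b)).mpr (h2.trans ((adjoint d b (d * b)).mp le_rfl))
  exact hbc.trans hcd

lemma crl_mul_iSup_le {ι : Sort*} {a : L} {f : ι → L} {c : L}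
    (h : ∀ i, a * f i ≤ c) : a * (⨆ i, f i) ≤ c := by
  rw [mul_comm]
  refine (adjoint _ _ _).mpr (iSup_le fun i => (adjoint _ _ _).mp ?_)
  rw [mul_comm]; exact h i

theorem stmt15 {A A' : Type*} [Nonempty A] [Nonempty A']
    (M : FuzzyAutomaton L Sig A) (M' : FuzzyAutomaton L Sig A')
    (φ : A → A' → L) (hφ : IsFuzzySimulation M M' φ) :
    (∀ w : SimForm L Sig, relSet (conv φ) (SimForm.eval M w) ≤ SimForm.eval M' w) ∧
    (∀ (x : A) (x' : A'),
      φ x x' ≤ ⨅ w : SimForm L Sig, himp (SimForm.eval M w x) (SimForm.eval M' w x')) := by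
  have main : ∀ w : SimForm L Sig, relSet (conv φ) (SimForm.eval M w) ≤ SimForm.eval M' w := by
    intro w
    induction w with
    | tau => exact hφ.2
    | act s w ih =>
      intro x'
      simp only [relSet, SimForm.eval, conv]
      refine iSup_le fun x => crl_mul_iSup_le fun y => ?_
      have h1 : φ x x' * M.δ x s y ≤ ⨆ y', M'.δ x' s y' * φ y y' := by
        have h := hφ.1 s x' y
        simp only [relComp, conv] at h
        exact le_trans (le_iSup (fun z => φ z x' * M.δ z s y) x) h
      have h2 : ∀ y', φ y y' * SimForm.eval M w y ≤ SimForm.eval M' w y' := fun y' =>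
        le_trans (le_iSup (fun z => conv φ y' z * SimForm.eval M w z) y) (ih y')
      calc φ x x' * (M.δ x s y * SimForm.eval M w y)
          = (φ x x' * M.δ x s y) * SimForm.eval M w y := by rw [mul_assoc]
        _ ≤ (⨆ y', M'.δ x' s y' * φ y y') * SimForm.eval M w y :=
            crl_mul_le_mul h1 le_rfl
        _ ≤ ⨆ y', M'.δ x' s y' * SimForm.eval M' w y' := by
            rw [mul_comm]
            refine crl_mul_iSup_le fun y' => ?_
            have he : SimForm.eval M w y * (M'.δ x' s y' * φ y y')
                = M'.δ x' s y' * (φ y y' * SimForm.eval M w y) := by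
              rw [mul_comm (φ y y') (SimForm.eval M w y), ← mul_assoc,
                mul_comm (SimForm.eval M w y) (M'.δ x' s y'), mul_assoc]
            rw [he]
            exact le_trans (crl_mul_le_mul le_rfl (h2 y'))
              (le_iSup (fun z => M'.δ x' s z * SimForm.eval M' w z) y')
    | imp a w ih =>
      intro x'
      refine iSup_le fun x => (adjoint _ _ _).mp ?_
      have h1 : φ x x' * SimForm.eval M w x ≤ SimForm.eval M' w x' :=
        le_trans (le_iSup (fun z => conv φ x' z * SimForm.eval M w z) x) (ih x')
      calc (conv φ x' x * SimForm.eval M (SimForm.imp a w) x) * a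
          = φ x x' * (himp a (SimForm.eval M w x) * a) := by
            simp only [conv, SimForm.eval, mul_assoc]
        _ ≤ φ x x' * SimForm.eval M w x :=
            crl_mul_le_mul le_rfl ((adjoint _ _ _).mpr le_rfl)
        _ ≤ SimForm.eval M' w x' := h1
    | and w1 w2 ih1 ih2 =>
      intro x'
      refine le_inf ?_ ?_
      · refine iSup_le fun x => ?_
        exact le_trans (le_trans (crl_mul_le_mul le_rfl inf_le_left)
          (le_iSup (fun z => conv φ x' z * SimForm.eval M w1 z) x)) (ih1 x')
      · refine iSup_le fun x => ?_
        exact le_trans (le_trans (crl_mul_le_mul le_rfl inf_le_right)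
          (le_iSup (fun z => conv φ x' z * SimForm.eval M w2 z) x)) (ih2 x')
  refine ⟨main, fun x x' => le_iInf fun w => (adjoint _ _ _).mp ?_⟩
  exact le_trans (le_iSup (fun z => conv φ x' z * SimForm.eval M w z) x) (main w x')
end

section
/- Suppose L is a complete linear residuated lattice whose monoid operation ⊗ is continuous with respect to infima, and A' is image-finite. Then the fuzzy relation φ(x,x') = ⋀_{w∈F_s}(w^A(x) → w^{A'}(x')) is the greatest fuzzy simulation between A and A' (Hennessy-Milner property for fuzzy simulations). -/
open CompleteResiduatedLattice

variable {L : Type*} [CompleteResiduatedLattice L]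

variable {Sig : Type*}

section Aux

lemma rl_mul_le_mul_left' (a : L) {b c : L} (h : b ≤ c) : a * b ≤ a * c := by
  rw [mul_comm a b]
  exact (adjoint b a (a * c)).mpr
    (h.trans ((adjoint c a (a * c)).mp (by rw [mul_comm])))

lemma rl_himp_mul_le (a b : L) : himp a b * a ≤ b := (adjoint _ _ _).mpr le_rfl

lemma rl_top_le_himp_self (a : L) : (⊤ : L) ≤ himp a a :=
  (adjoint ⊤ a a).mp (by rw [← one_eq_top, one_mul])

lemma rl_mul_iSup {ι : Sort*} (a : L) (f : ι → L) : a * ⨆ i, f i = ⨆ i, a * f i := by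
  apply le_antisymm
  · rw [mul_comm]
    refine (adjoint _ a _).mpr (iSup_le fun i => (adjoint (f i) a _).mp ?_)
    rw [mul_comm]
    exact le_iSup (fun i => a * f i) i
  · exact iSup_le fun i => rl_mul_le_mul_left' a (le_iSup f i)

lemma rl_mul_iInf (cont : ∀ (a : L) (B : Set L), a * sInf B = ⨅ b ∈ B, a * b)
    {ι : Sort*} (a : L) (f : ι → L) : a * ⨅ i, f i = ⨅ i, a * f i := by
  have h := cont a (Set.range f)
  rw [sInf_range, iInf_range] at h
  exact h

lemma rl_bot_mul (a : L) : (⊥ : L) * a = ⊥ :=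
  le_bot_iff.mp ((adjoint _ _ _).mpr bot_le)

lemma rl_sup_nle (lin : ∀ a b : L, a ≤ b ∨ b ≤ a) {r a b : L}
    (ha : ¬ r ≤ a) (hb : ¬ r ≤ b) : ¬ r ≤ a ⊔ b := by
  rcases lin a b with h | h
  · rwa [sup_eq_right.mpr h]
  · rwa [sup_eq_left.mpr h]

lemma rl_finset_sup_nle (lin : ∀ a b : L, a ≤ b ∨ b ≤ a) {r : L} {ι : Type*}
    (F : Finset ι) (g : ι → L) (hbot : ¬ r ≤ ⊥) (h : ∀ i ∈ F, ¬ r ≤ g i) :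
    ¬ r ≤ F.sup g := by
  classical
  induction F using Finset.induction with
  | empty => simpa using hbot
  | @insert i F hnot ih =>
      rw [Finset.sup_insert]
      exact rl_sup_nle lin (h _ (Finset.mem_insert_self _ _))
        (ih fun j hj => h j (Finset.mem_insert_of_mem hj))

/-- Finite conjunction of formulas over a base formula. -/
def rlBigAnd (l : List (SimForm L Sig)) (base : SimForm L Sig) : SimForm L Sig :=
  l.foldr .and base

lemma rlBigAnd_eval_top {A : Type*} (M : FuzzyAutomaton L Sig A) (x : A)
    (l : List (SimForm L Sig)) (base : SimForm L Sig)
    (hl : ∀ f ∈ l, (⊤ : L) ≤ SimForm.eval M f x)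
    (hb : (⊤ : L) ≤ SimForm.eval M base x) :
    (⊤ : L) ≤ SimForm.eval M (rlBigAnd l base) x := by
  induction l with
  | nil => exact hb
  | cons f l ih =>
      exact le_inf (hl f (List.mem_cons_self)) (ih fun g hg => hl g (List.mem_cons_of_mem _ hg))

lemma rlBigAnd_eval_le {A : Type*} (M : FuzzyAutomaton L Sig A) (x : A)
    {l : List (SimForm L Sig)} {f : SimForm L Sig} (hf : f ∈ l) (base : SimForm L Sig) :
    SimForm.eval M (rlBigAnd l base) x ≤ SimForm.eval M f x := by
  induction l with
  | nil => cases hf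
  | cons g l ih =>
      rcases List.mem_cons.mp hf with h | h
      · subst h; exact inf_le_left
      · exact le_trans inf_le_right (ih h)

lemma sim_eval_le {A A' : Type*} (M : FuzzyAutomaton L Sig A)
    (M' : FuzzyAutomaton L Sig A') {ψ : A → A' → L}
    (hψ : IsFuzzySimulation M M' ψ) :
    ∀ (w : SimForm L Sig) (x : A) (x' : A'),
      ψ x x' * SimForm.eval M w x ≤ SimForm.eval M' w x' := by
  intro w
  induction w with
  | tau =>
      intro x x'
      exact le_trans (le_iSup (fun z => ψ z x' * M.τ z) x) (hψ.2 x')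
  | act s w ih =>
      intro x x'
      show ψ x x' * (⨆ z, M.δ x s z * SimForm.eval M w z) ≤
        ⨆ y', M'.δ x' s y' * SimForm.eval M' w y'
      rw [rl_mul_iSup]
      apply iSup_le
      intro z
      have h1 : ψ x x' * M.δ x s z ≤ ⨆ y', M'.δ x' s y' * ψ z y' :=
        le_trans (le_iSup (fun u => ψ u x' * M.δ u s z) x) (hψ.1 s x' z)
      calc ψ x x' * (M.δ x s z * SimForm.eval M w z)
          = (ψ x x' * M.δ x s z) * SimForm.eval M w z := (mul_assoc _ _ _).symm
        _ = SimForm.eval M w z * (ψ x x' * M.δ x s z) := mul_comm _ _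
        _ ≤ SimForm.eval M w z * ⨆ y', M'.δ x' s y' * ψ z y' :=
            rl_mul_le_mul_left' _ h1
        _ = ⨆ y', SimForm.eval M w z * (M'.δ x' s y' * ψ z y') := rl_mul_iSup _ _
        _ ≤ ⨆ y', M'.δ x' s y' * SimForm.eval M' w y' := by
            apply iSup_mono
            intro y'
            calc SimForm.eval M w z * (M'.δ x' s y' * ψ z y')
                = M'.δ x' s y' * (ψ z y' * SimForm.eval M w z) := by
                  rw [mul_comm (ψ z y') (SimForm.eval M w z), ← mul_assoc,
                    mul_comm (SimForm.eval M w z) (M'.δ x' s y'), mul_assoc]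
              _ ≤ M'.δ x' s y' * SimForm.eval M' w y' :=
                  rl_mul_le_mul_left' _ (ih z y')
  | imp a w ih =>
      intro x x'
      show ψ x x' * himp a (SimForm.eval M w x) ≤ himp a (SimForm.eval M' w x')
      refine (adjoint _ _ _).mp ?_
      calc (ψ x x' * himp a (SimForm.eval M w x)) * a
          = ψ x x' * (himp a (SimForm.eval M w x) * a) := mul_assoc _ _ _
        _ ≤ ψ x x' * SimForm.eval M w x := rl_mul_le_mul_left' _ (rl_himp_mul_le _ _)
        _ ≤ SimForm.eval M' w x' := ih x x'
  | and w₁ w₂ ih₁ ih₂ =>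
      intro x x'
      exact le_inf (le_trans (rl_mul_le_mul_left' _ inf_le_left) (ih₁ x x'))
        (le_trans (rl_mul_le_mul_left' _ inf_le_right) (ih₂ x x'))

end Aux

theorem stmt16 {A A' : Type*} [Nonempty A] [Nonempty A']
    (lin : ∀ a b : L, a ≤ b ∨ b ≤ a)
    (cont : ∀ (a : L) (B : Set L), a * sInf B = ⨅ b ∈ B, a * b)
    (M : FuzzyAutomaton L Sig A) (M' : FuzzyAutomaton L Sig A')
    (hσ : {x' : A' | M'.σ x' ≠ ⊥}.Finite)
    (hδ : ∀ (s : Sig) (x' : A'), {y' : A' | M'.δ x' s y' ≠ ⊥}.Finite) :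
    letI φ : A → A' → L := fun x x' =>
      ⨅ w : SimForm L Sig, himp (SimForm.eval M w x) (SimForm.eval M' w x')
    IsFuzzySimulation M M' φ ∧
      ∀ ψ : A → A' → L, IsFuzzySimulation M M' ψ → ψ ≤ φ := by
  classical
  set φ : A → A' → L := fun x x' =>
    ⨅ w : SimForm L Sig, himp (SimForm.eval M w x) (SimForm.eval M' w x') with hφdef
  have hφw : ∀ (w : SimForm L Sig) (x : A) (x' : A'),
      φ x x' * SimForm.eval M w x ≤ SimForm.eval M' w x' := fun w x x' =>
    (adjoint _ _ _).mpr (iInf_le (fun w => himp (SimForm.eval M w x) (SimForm.eval M' w x')) w)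
  constructor
  · constructor
    · -- transition condition
      intro s x' y
      show (⨆ x, φ x x' * M.δ x s y) ≤ ⨆ y', M'.δ x' s y' * φ y y'
      apply iSup_le
      intro x
      by_contra hcon
      set r : L := φ x x' * M.δ x s y with hr
      have hrbot : ¬ r ≤ (⊥ : L) := fun h => hcon (h.trans bot_le)
      have hW : ∀ y' : A', ∃ w : SimForm L Sig,
          ¬ r ≤ M'.δ x' s y' * himp (SimForm.eval M w y) (SimForm.eval M' w y') := by
        intro y'
        by_contra hc
        push_neg at hc
        apply hcon
        have h1 : r ≤ M'.δ x' s y' * φ y y' := by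
          show r ≤ M'.δ x' s y' *
            ⨅ w, himp (SimForm.eval M w y) (SimForm.eval M' w y')
          rw [rl_mul_iInf cont]
          exact le_iInf hc
        exact h1.trans (le_iSup (fun y' => M'.δ x' s y' * φ y y') y')
      choose W hWspec using hW
      set F : Finset A' := (hδ s x').toFinset with hF
      set u : SimForm L Sig :=
        rlBigAnd (F.toList.map (fun y' => SimForm.imp (SimForm.eval M (W y') y) (W y')))
          (SimForm.imp (M.τ y) SimForm.tau) with hu
      have hu_top : (⊤ : L) ≤ SimForm.eval M u y := by
        refine rlBigAnd_eval_top M y _ _ ?_ ?_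
        · intro f hf
          rcases List.mem_map.mp hf with ⟨y', _, rfl⟩
          exact rl_top_le_himp_self _
        · exact rl_top_le_himp_self _
      have step1 : r ≤ SimForm.eval M' (.act s u) x' := by
        have h0 : M.δ x s y ≤ SimForm.eval M (.act s u) x := by
          calc M.δ x s y = M.δ x s y * ⊤ := by rw [← one_eq_top, mul_one]
            _ ≤ M.δ x s y * SimForm.eval M u y := rl_mul_le_mul_left' _ hu_top
            _ ≤ ⨆ z, M.δ x s z * SimForm.eval M u z :=
                le_iSup (fun z => M.δ x s z * SimForm.eval M u z) y
        exact le_trans (rl_mul_le_mul_left' _ h0) (hφw (.act s u) x x')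
      set g : A' → L := fun y' =>
        M'.δ x' s y' * himp (SimForm.eval M (W y') y) (SimForm.eval M' (W y') y') with hg
      have hbound : SimForm.eval M' (.act s u) x' ≤ F.sup g := by
        show (⨆ y', M'.δ x' s y' * SimForm.eval M' u y') ≤ F.sup g
        apply iSup_le
        intro y'
        by_cases hy : y' ∈ F
        · refine le_trans ?_ (Finset.le_sup hy)
          refine rl_mul_le_mul_left' _ ?_
          exact rlBigAnd_eval_le M' y'
            (List.mem_map_of_mem (Finset.mem_toList.mpr hy)) _
        · have hz : M'.δ x' s y' = ⊥ := by
            have := hy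
            rw [hF, Set.Finite.mem_toFinset] at this
            simpa using this
          rw [hz, rl_bot_mul]
          exact bot_le
      have hsup : ¬ r ≤ F.sup g :=
        rl_finset_sup_nle lin F g hrbot (fun y' _ => hWspec y')
      exact hsup (step1.trans hbound)
    · -- terminal condition
      intro x'
      exact iSup_le fun x => hφw SimForm.tau x x'
  · intro ψ hψ x x'
    exact le_iInf fun w => (adjoint _ _ _).mp (sim_eval_le M M' hψ w x x')
end
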